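/- For every ε > 0 there exists n₀ such that the following holds: if D is a directed graph on n ≥ n₀ vertices, S ⊆ V(D), m is an integer with 0 ≤ m ≤ |S|, and c = m/|S|, then there exists T ⊆ S with |T| = m such that for every vertex v of D: ||N⁺(v) ∩ T| − c·|N⁺(v) ∩ S|| ≤ εn, ||N⁻(v) ∩ T| − c·|N⁻(v) ∩ S|| ≤ εn, ||N⁺(v) ∩ (S \ T)| − (1−c)·|N⁺(v) ∩ S|| ≤ εn, and ||N⁻(v) ∩ (S \ T)| − (1−c)·|N⁻(v) ∩ S|| ≤ εn. -/

import Mathlib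

open Finset
set_option linter.unusedSectionVars false
set_option maxHeartbeats 1000000

variable {V : Type} [DecidableEq V]

noncomputable def Wgt (c : ℝ) (s : Finset V) (F : Finset V → ℝ) : ℝ :=
  ∑ t ∈ s.powerset, c ^ t.card * (1 - c) ^ (s.card - t.card) * F t

theorem Wgt_congr (c : ℝ) (s : Finset V) {F G : Finset V → ℝ}
    (h : ∀ t ⊆ s, F t = G t) : Wgt c s F = Wgt c s G := by
  unfold Wgt
  refine Finset.sum_congr rfl fun t ht => ?_
  rw [h t (Finset.mem_powerset.1 ht)]

theorem Wgt_add (c : ℝ) (s : Finset V) (F G : Finset V → ℝ) :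
    Wgt c s (fun t => F t + G t) = Wgt c s F + Wgt c s G := by
  unfold Wgt
  rw [← Finset.sum_add_distrib]
  exact Finset.sum_congr rfl fun t _ => by ring

theorem Wgt_const_mul (c : ℝ) (s : Finset V) (r : ℝ) (F : Finset V → ℝ) :
    Wgt c s (fun t => r * F t) = r * Wgt c s F := by
  unfold Wgt
  rw [Finset.mul_sum]
  exact Finset.sum_congr rfl fun t _ => by ring

theorem Wgt_nonneg {c : ℝ} (hc0 : 0 ≤ c) (hc1 : c ≤ 1) (s : Finset V)
    {F : Finset V → ℝ} (hF : ∀ t ⊆ s, 0 ≤ F t) : 0 ≤ Wgt c s F := by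
  unfold Wgt
  refine Finset.sum_nonneg fun t ht => ?_
  have h := hF t (Finset.mem_powerset.1 ht)
  have h1c : (0:ℝ) ≤ 1 - c := by linarith
  exact mul_nonneg (mul_nonneg (pow_nonneg hc0 t.card) (pow_nonneg h1c (s.card - t.card))) h

theorem Wgt_step {c : ℝ} {s : Finset V} {w : V} (hw : w ∉ s) (F : Finset V → ℝ) :
    Wgt c (insert w s) F
      = (1 - c) * Wgt c s F + c * Wgt c s (fun t => F (insert w t)) := by
  unfold Wgt
  rw [Finset.sum_powerset_insert hw, Finset.mul_sum, Finset.mul_sum, Finset.card_insert_of_notMem hw]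
  congr 1
  · refine Finset.sum_congr rfl fun t ht => ?_
    have hts := Finset.mem_powerset.1 ht
    have h1 : t.card ≤ s.card := Finset.card_le_card hts
    have : s.card + 1 - t.card = (s.card - t.card) + 1 := by omega
    rw [this, pow_succ]
    ring
  · refine Finset.sum_congr rfl fun t ht => ?_
    have hts := Finset.mem_powerset.1 ht
    have hwt : w ∉ t := fun h => hw (hts h)
    have h1 : t.card ≤ s.card := Finset.card_le_card hts
    rw [Finset.card_insert_of_notMem hwt]
    have : s.card + 1 - (t.card + 1) = s.card - t.card := by omega
    rw [this, pow_succ]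
    ring

theorem Wgt_one {c : ℝ} (s : Finset V) : Wgt c s (fun _ => (1:ℝ)) = 1 := by
  classical
  induction s using Finset.induction_on with
  | empty => simp [Wgt]
  | insert _ _ hw ih => rw [Wgt_step hw]; rw [ih]; ring

noncomputable def Xf (a : V → ℝ) (c : ℝ) (s : Finset V) (t : Finset V) : ℝ :=
  ∑ w ∈ s, a w * ((if w ∈ t then (1:ℝ) else 0) - c)

theorem Xf_insert {a : V → ℝ} {c : ℝ} {s t : Finset V} {w : V}
    (hw : w ∉ s) (ht : t ⊆ s) :
    Xf a c (insert w s) t = Xf a c s t + a w * (0 - c) ∧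
    Xf a c (insert w s) (insert w t) = Xf a c s t + a w * (1 - c) := by
  have hwt : w ∉ t := fun h => hw (ht h)
  constructor
  · unfold Xf
    rw [Finset.sum_insert hw, if_neg hwt]
    ring
  · unfold Xf
    rw [Finset.sum_insert hw, if_pos (Finset.mem_insert_self w t)]
    have : ∑ u ∈ s, a u * ((if u ∈ insert w t then (1:ℝ) else 0) - c)
        = ∑ u ∈ s, a u * ((if u ∈ t then (1:ℝ) else 0) - c) := by
      refine Finset.sum_congr rfl fun u hu => ?_
      have huw : ¬ u = w := fun h => hw (h ▸ hu)
      simp [Finset.mem_insert, huw]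
    rw [this]
    ring

theorem Wgt_moments {c : ℝ} (hc0 : 0 ≤ c) (hc1 : c ≤ 1) (a : V → ℝ)
    (ha : ∀ w, 0 ≤ a w ∧ a w ≤ 1) (s : Finset V) :
    Wgt c s (fun t => Xf a c s t) = 0 ∧
    (0 ≤ Wgt c s (fun t => (Xf a c s t) ^ 2) ∧
      Wgt c s (fun t => (Xf a c s t) ^ 2) ≤ (s.card : ℝ) / 4) ∧
    Wgt c s (fun t => (Xf a c s t) ^ 4) ≤ ((s.card : ℝ)) ^ 2 := by
  classical
  induction s using Finset.induction_on with
  | empty => simp [Wgt, Xf]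
  | @insert w s hw ih =>
    obtain ⟨ih1, ⟨ih2a, ih2⟩, ih4⟩ := ih
    -- abbreviations
    set b1 : ℝ := a w * (0 - c) with hb1
    set b2 : ℝ := a w * (1 - c) with hb2
    have hXt : ∀ t ⊆ s, Xf a c (insert w s) t = Xf a c s t + b1 :=
      fun t ht => (Xf_insert hw ht).1
    have hXit : ∀ t ⊆ s, Xf a c (insert w s) (insert w t) = Xf a c s t + b2 :=
      fun t ht => (Xf_insert hw ht).2
    -- expansion lemmas
    have lin : ∀ b : ℝ, Wgt c s (fun t => Xf a c s t + b)
        = Wgt c s (fun t => Xf a c s t) + b := by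
      intro b
      rw [show (fun t => Xf a c s t + b) = fun t => Xf a c s t + b * (1:ℝ) from
        funext fun t => by ring, Wgt_add, Wgt_const_mul, Wgt_one, mul_one]
    have sq : ∀ b : ℝ, Wgt c s (fun t => (Xf a c s t + b) ^ 2)
        = Wgt c s (fun t => (Xf a c s t) ^ 2)
          + 2 * b * Wgt c s (fun t => Xf a c s t) + b ^ 2 := by
      intro b
      rw [show (fun t => (Xf a c s t + b) ^ 2)
          = fun t => (Xf a c s t) ^ 2 + ((2 * b) * Xf a c s t + (b ^ 2) * (1:ℝ)) from
        funext fun t => by ring, Wgt_add, Wgt_add, Wgt_const_mul, Wgt_const_mul, Wgt_one]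
      ring
    have quart : ∀ b : ℝ, Wgt c s (fun t => (Xf a c s t + b) ^ 4)
        = Wgt c s (fun t => (Xf a c s t) ^ 4)
          + 4 * b * Wgt c s (fun t => (Xf a c s t) ^ 3)
          + 6 * b ^ 2 * Wgt c s (fun t => (Xf a c s t) ^ 2)
          + 4 * b ^ 3 * Wgt c s (fun t => Xf a c s t) + b ^ 4 := by
      intro b
      rw [show (fun t => (Xf a c s t + b) ^ 4)
          = fun t => (Xf a c s t) ^ 4 + ((4 * b) * (Xf a c s t) ^ 3
            + ((6 * b ^ 2) * (Xf a c s t) ^ 2 + ((4 * b ^ 3) * Xf a c s t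
            + (b ^ 4) * (1:ℝ)))) from funext fun t => by ring,
        Wgt_add, Wgt_add, Wgt_add, Wgt_add, Wgt_const_mul, Wgt_const_mul,
        Wgt_const_mul, Wgt_const_mul, Wgt_one]
      ring
    have haw := ha w
    have key1 : (1 - c) * b1 + c * b2 = 0 := by rw [hb1, hb2]; ring
    have key2 : (1 - c) * b1 ^ 2 + c * b2 ^ 2 = (a w) ^ 2 * (c * (1 - c)) := by
      rw [hb1, hb2]; ring
    have key4 : (1 - c) * b1 ^ 4 + c * b2 ^ 4
        = (a w) ^ 4 * (c * (1 - c)) * (c ^ 3 + (1 - c) ^ 3) := by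
      rw [hb1, hb2]; ring
    have hcc : 0 ≤ c * (1 - c) ∧ c * (1 - c) ≤ 1 / 4 := by
      constructor
      · nlinarith
      · nlinarith [sq_nonneg (2 * c - 1)]
    have haw2 : (a w) ^ 2 ≤ 1 := by nlinarith [haw.1, haw.2]
    have haw4 : (a w) ^ 4 ≤ 1 := by nlinarith [haw.1, haw.2, sq_nonneg (a w), haw2]
    have hm2 : 0 ≤ (a w) ^ 2 * (c * (1 - c)) ∧ (a w) ^ 2 * (c * (1 - c)) ≤ 1 / 4 := by
      refine ⟨mul_nonneg (sq_nonneg _) hcc.1, ?_⟩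
      calc (a w) ^ 2 * (c * (1 - c)) ≤ c * (1 - c) := mul_le_of_le_one_left hcc.1 haw2
        _ ≤ 1 / 4 := hcc.2
    have h3 : (0:ℝ) ≤ c ^ 3 + (1 - c) ^ 3 := by
      have := pow_nonneg hc0 3
      have : (0:ℝ) ≤ (1 - c) ^ 3 := pow_nonneg (by linarith) 3
      nlinarith [pow_nonneg hc0 3]
    have h4 : c ^ 3 + (1 - c) ^ 3 ≤ 1 := by
      have he : c ^ 3 + (1 - c) ^ 3 = 1 - 3 * (c * (1 - c)) := by ring
      rw [he]; linarith [hcc.1]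
    have hm4 : 0 ≤ (a w) ^ 4 * (c * (1 - c)) * (c ^ 3 + (1 - c) ^ 3) ∧
        (a w) ^ 4 * (c * (1 - c)) * (c ^ 3 + (1 - c) ^ 3) ≤ 1 / 4 := by
      have h1 : (0:ℝ) ≤ (a w) ^ 4 := by positivity
      constructor
      · exact mul_nonneg (mul_nonneg h1 hcc.1) h3
      · have s1 : (a w) ^ 4 * (c * (1 - c)) ≤ 1 * (1 / 4) :=
          mul_le_mul haw4 hcc.2 hcc.1 (by norm_num)
        have s2 : (a w) ^ 4 * (c * (1 - c)) * (c ^ 3 + (1 - c) ^ 3) ≤ (1 * (1 / 4)) * 1 :=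
          mul_le_mul s1 h4 h3 (by norm_num)
        linarith
    -- rewrite the three Wgt's over `insert w s`
    have A1t : Wgt c s (fun t => Xf a c (insert w s) t)
        = Wgt c s (fun t => Xf a c s t) + b1 := by
      rw [Wgt_congr c s (G := fun t => Xf a c s t + b1) hXt, lin]
    have A1i : Wgt c s (fun t => Xf a c (insert w s) (insert w t))
        = Wgt c s (fun t => Xf a c s t) + b2 := by
      rw [Wgt_congr c s (G := fun t => Xf a c s t + b2) hXit, lin]
    have A2t : Wgt c s (fun t => Xf a c (insert w s) t ^ 2)
        = Wgt c s (fun t => Xf a c s t ^ 2)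
          + 2 * b1 * Wgt c s (fun t => Xf a c s t) + b1 ^ 2 := by
      rw [Wgt_congr c s (G := fun t => (Xf a c s t + b1) ^ 2)
        (fun t ht => by rw [hXt t ht]), sq]
    have A2i : Wgt c s (fun t => Xf a c (insert w s) (insert w t) ^ 2)
        = Wgt c s (fun t => Xf a c s t ^ 2)
          + 2 * b2 * Wgt c s (fun t => Xf a c s t) + b2 ^ 2 := by
      rw [Wgt_congr c s (G := fun t => (Xf a c s t + b2) ^ 2)
        (fun t ht => by rw [hXit t ht]), sq]
    have A4t : Wgt c s (fun t => Xf a c (insert w s) t ^ 4)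
        = Wgt c s (fun t => Xf a c s t ^ 4)
          + 4 * b1 * Wgt c s (fun t => Xf a c s t ^ 3)
          + 6 * b1 ^ 2 * Wgt c s (fun t => Xf a c s t ^ 2)
          + 4 * b1 ^ 3 * Wgt c s (fun t => Xf a c s t) + b1 ^ 4 := by
      rw [Wgt_congr c s (G := fun t => (Xf a c s t + b1) ^ 4)
        (fun t ht => by rw [hXt t ht]), quart]
    have A4i : Wgt c s (fun t => Xf a c (insert w s) (insert w t) ^ 4)
        = Wgt c s (fun t => Xf a c s t ^ 4)
          + 4 * b2 * Wgt c s (fun t => Xf a c s t ^ 3)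
          + 6 * b2 ^ 2 * Wgt c s (fun t => Xf a c s t ^ 2)
          + 4 * b2 ^ 3 * Wgt c s (fun t => Xf a c s t) + b2 ^ 4 := by
      rw [Wgt_congr c s (G := fun t => (Xf a c s t + b2) ^ 4)
        (fun t ht => by rw [hXit t ht]), quart]
    have hdn : (0:ℝ) ≤ (s.card : ℝ) := Nat.cast_nonneg _
    have hcard : ((insert w s).card : ℝ) = (s.card : ℝ) + 1 := by
      rw [Finset.card_insert_of_notMem hw]; push_cast; ring
    refine ⟨?_, ⟨?_, ?_⟩, ?_⟩
    · rw [Wgt_step hw, A1t, A1i, ih1]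
      linarith [key1]
    · exact Wgt_nonneg hc0 hc1 _ (fun t _ => sq_nonneg _)
    · rw [Wgt_step hw, A2t, A2i, ih1, hcard]
      nlinarith [key2, hm2.1, hm2.2, ih2]
    · rw [Wgt_step hw, A4t, A4i, ih1, hcard]
      set W4 := Wgt c s (fun t => Xf a c s t ^ 4) with hW4
      set W3 := Wgt c s (fun t => Xf a c s t ^ 3) with hW3
      set W2 := Wgt c s (fun t => Xf a c s t ^ 2) with hW2
      have hE : (1 - c) * (W4 + 4 * b1 * W3 + 6 * b1 ^ 2 * W2 + 4 * b1 ^ 3 * 0 + b1 ^ 4)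
          + c * (W4 + 4 * b2 * W3 + 6 * b2 ^ 2 * W2 + 4 * b2 ^ 3 * 0 + b2 ^ 4)
          = W4 + 4 * ((1 - c) * b1 + c * b2) * W3
            + 6 * ((1 - c) * b1 ^ 2 + c * b2 ^ 2) * W2
            + ((1 - c) * b1 ^ 4 + c * b2 ^ 4) := by ring
      rw [hE, key1, key2, key4]
      have hprod : 6 * ((a w) ^ 2 * (c * (1 - c))) * W2 ≤ 6 * (1 / 4) * ((s.card : ℝ) / 4) := by
        have := mul_le_mul hm2.2 ih2 ih2a (by norm_num : (0:ℝ) ≤ 1 / 4)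
        nlinarith [this]
      nlinarith [hm4.1, hm4.2, ih4, hprod, hdn]

theorem Wgt_const (c : ℝ) (s : Finset V) (r : ℝ) : Wgt c s (fun _ => r) = r := by
  have := Wgt_const_mul c s r (fun _ => (1:ℝ))
  simpa [Wgt_one] using this

theorem Wgt_exists_le {c : ℝ} (hc0 : 0 ≤ c) (hc1 : c ≤ 1) (s : Finset V)
    {G : Finset V → ℝ} {B : ℝ} (hWB : Wgt c s G ≤ B) : ∃ t ⊆ s, G t ≤ B := by
  by_contra h
  push_neg at h
  -- all terms of (G - B) are positive on the powerset
  have hGB : Wgt c s (fun t => G t - B) = Wgt c s G - B := by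
    have h1 : Wgt c s (fun t => (G t - B) + B) = Wgt c s (fun t => G t - B) + Wgt c s (fun _ => B) :=
      Wgt_add c s _ _
    simp only [sub_add_cancel] at h1
    rw [h1, Wgt_const]
    ring
  -- some weight is positive
  have hsum : ∑ t ∈ s.powerset, c ^ t.card * (1 - c) ^ (s.card - t.card) = 1 := by
    have := Wgt_one (c := c) s
    unfold Wgt at this
    simpa using this
  obtain ⟨t₀, ht₀, hpt₀⟩ := Finset.exists_ne_zero_of_sum_ne_zero (by rw [hsum]; norm_num :
    ∑ t ∈ s.powerset, c ^ t.card * (1 - c) ^ (s.card - t.card) ≠ 0)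
  have h1c : (0:ℝ) ≤ 1 - c := by linarith
  have hpt₀' : 0 < c ^ t₀.card * (1 - c) ^ (s.card - t₀.card) :=
    lt_of_le_of_ne (mul_nonneg (pow_nonneg hc0 _) (pow_nonneg h1c _)) (Ne.symm hpt₀)
  have hpos : 0 < Wgt c s (fun t => G t - B) := by
    unfold Wgt
    refine Finset.sum_pos' (fun t ht => ?_) ⟨t₀, ht₀, ?_⟩
    · have hGt := h t (Finset.mem_powerset.1 ht)
      show 0 ≤ c ^ t.card * (1 - c) ^ (s.card - t.card) * (G t - B)
      exact mul_nonneg (mul_nonneg (pow_nonneg hc0 _) (pow_nonneg h1c _)) (by linarith)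
    · have hGt := h t₀ (Finset.mem_powerset.1 ht₀)
      show 0 < c ^ t₀.card * (1 - c) ^ (s.card - t₀.card) * (G t₀ - B)
      exact mul_pos hpt₀' (by linarith)
  rw [hGB] at hpos
  linarith

theorem Wgt_sum {ι : Type} (c : ℝ) (s : Finset V) (A : Finset ι) (H : ι → Finset V → ℝ) :
    Wgt c s (fun t => ∑ i ∈ A, H i t) = ∑ i ∈ A, Wgt c s (H i) := by
  unfold Wgt
  simp_rw [Finset.mul_sum]
  exact Finset.sum_comm

theorem Xf_indicator {c : ℝ} (P : V → Prop) [DecidablePred P] {s t : Finset V} (ht : t ⊆ s) :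
    Xf (fun w => if P w then (1:ℝ) else 0) c s t
      = (((s.filter P) ∩ t).card : ℝ) - c * ((s.filter P).card : ℝ) := by
  classical
  unfold Xf
  simp only [ite_mul, one_mul, zero_mul]
  rw [← Finset.sum_filter, Finset.sum_sub_distrib, Finset.sum_boole, Finset.sum_const,
    nsmul_eq_mul, Finset.filter_mem_eq_inter]
  ring

open Classical in
noncomputable def indF {V : Type} (P : V → Prop) : V → ℝ := fun w => if P w then 1 else 0

theorem indF_bounds {V : Type} (P : V → Prop) (w : V) : 0 ≤ indF P w ∧ indF P w ≤ 1 := by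
  unfold indF
  by_cases h : P w <;> simp [h]

theorem Xf_indF {c : ℝ} (P : V → Prop) [DecidablePred P] {s t : Finset V} (ht : t ⊆ s) :
    Xf (indF P) c s t = (((s.filter P) ∩ t).card : ℝ) - c * ((s.filter P).card : ℝ) := by
  have h : Xf (indF P) c s t = Xf (fun w => if P w then (1:ℝ) else 0) c s t := by
    unfold Xf indF
    exact Finset.sum_congr rfl (fun w _ => by by_cases h : P w <;> simp [h])
  rw [h, Xf_indicator P ht]

theorem card_inter_abs {N t t' : Finset V} (h : t' ⊆ t) :
    |((N ∩ t').card : ℝ) - ((N ∩ t).card : ℝ)| ≤ (t.card : ℝ) - (t'.card : ℝ) := by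
  have hsub : N ∩ t' ⊆ N ∩ t := Finset.inter_subset_inter (Finset.Subset.refl N) h
  have hc1 : (N ∩ t').card ≤ (N ∩ t).card := Finset.card_le_card hsub
  have hct : t'.card ≤ t.card := Finset.card_le_card h
  have h2 : (N ∩ t).card - (N ∩ t').card ≤ t.card - t'.card := by
    calc (N ∩ t).card - (N ∩ t').card = ((N ∩ t) \ (N ∩ t')).card :=
          (Finset.card_sdiff_of_subset hsub).symm
      _ ≤ (t \ t').card := Finset.card_le_card (by
          intro x hx
          simp only [Finset.mem_sdiff, Finset.mem_inter] at *
          tauto)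
      _ = t.card - t'.card := Finset.card_sdiff_of_subset h
  rw [abs_sub_comm, abs_of_nonneg (sub_nonneg.2 (by exact_mod_cast hc1))]
  rw [← Nat.cast_sub hc1, ← Nat.cast_sub hct]
  exact_mod_cast h2

theorem statement19 (ε : ℝ) (hε : 0 < ε) :
    ∃ n₀ : ℕ, ∀ (V : Type) [Fintype V] (E : V → V → Prop),
      (∀ v, ¬ E v v) →
      n₀ ≤ Fintype.card V →
      ∀ (S : Set V) (m : ℕ), m ≤ S.ncard →
        ∃ T : Set V, T ⊆ S ∧ T.ncard = m ∧
          ∀ v : V,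
            |({w ∈ T | E v w}.ncard : ℝ) -
                (m : ℝ) / (S.ncard : ℝ) * ({w ∈ S | E v w}.ncard : ℝ)| ≤
              ε * (Fintype.card V : ℝ) ∧
            |({w ∈ T | E w v}.ncard : ℝ) -
                (m : ℝ) / (S.ncard : ℝ) * ({w ∈ S | E w v}.ncard : ℝ)| ≤
              ε * (Fintype.card V : ℝ) ∧
            |({w ∈ S \ T | E v w}.ncard : ℝ) -
                (1 - (m : ℝ) / (S.ncard : ℝ)) * ({w ∈ S | E v w}.ncard : ℝ)| ≤
              ε * (Fintype.card V : ℝ) ∧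
            |({w ∈ S \ T | E w v}.ncard : ℝ) -
                (1 - (m : ℝ) / (S.ncard : ℝ)) * ({w ∈ S | E w v}.ncard : ℝ)| ≤
              ε * (Fintype.card V : ℝ) := by
  classical
  refine ⟨⌈(48:ℝ)/ε^4⌉₊ + 1, ?_⟩
  intro V _ E _hirr hn S m hm
  classical
  have hε4 : (0:ℝ) < ε ^ 4 := by positivity
  set n := Fintype.card V with hn_def
  have hn1 : 1 ≤ n := le_trans (by omega) hn
  have hnR0 : (0:ℝ) ≤ (n:ℝ) := Nat.cast_nonneg n
  have hnR1 : (1:ℝ) ≤ (n:ℝ) := by exact_mod_cast hn1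
  have hnR : (48:ℝ) / ε ^ 4 ≤ (n : ℝ) := by
    refine le_trans (Nat.le_ceil _) ?_
    exact_mod_cast Nat.le_of_succ_le hn
  have hεn : (0:ℝ) ≤ ε * n := by positivity
  have hSfin : S.Finite := S.toFinite
  set s : Finset V := hSfin.toFinset with hs_def
  have hcoe : (↑s : Set V) = S := hSfin.coe_toFinset
  have hScard : S.ncard = s.card := Set.ncard_eq_toFinset_card S hSfin
  have hmk : m ≤ s.card := by rw [← hScard]; exact hm
  by_cases hk0 : s.card = 0
  · -- S is empty
    have hm0 : m = 0 := by omega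
    have hSe : S = ∅ := by
      rw [← hcoe, Finset.card_eq_zero.1 hk0]; simp
    refine ⟨∅, by simp, by simp [hm0], fun v => ?_⟩
    simp only [hSe, hm0]
    norm_num
    positivity
  · have hk : 0 < s.card := Nat.pos_of_ne_zero hk0
    have hkR : (0:ℝ) < (s.card : ℝ) := by exact_mod_cast hk
    have hkn : (s.card : ℝ) ≤ (n : ℝ) := by
      have : s.card ≤ n := by
        rw [hn_def]
        simpa using Finset.card_le_univ s
      exact_mod_cast this
    set c : ℝ := (m : ℝ) / (s.card : ℝ) with hc_def
    have hc0 : 0 ≤ c := by positivity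
    have hc1 : c ≤ 1 := by
      rw [hc_def, div_le_one hkR]; exact_mod_cast hmk
    have hck : c * (s.card : ℝ) = (m : ℝ) := by
      rw [hc_def]; field_simp
    have hmom : ∀ P : V → Prop,
        Wgt c s (fun t => (Xf (indF P) c s t) ^ 4)
          ≤ ((s.card : ℝ)) ^ 2 :=
      fun P => (Wgt_moments hc0 hc1 _ (indF_bounds P) s).2.2
    -- total fourth-moment bound
    have hWG : Wgt c s (fun t =>
        (Xf (indF (fun _ => True)) c s t) ^ 4
          + ∑ v ∈ Finset.univ,
            ((Xf (indF (fun w => E v w)) c s t) ^ 4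
              + (Xf (indF (fun w => E w v)) c s t) ^ 4))
        ≤ 3 * (n:ℝ) ^ 3 := by
      rw [Wgt_add, Wgt_sum]
      have hsum : ∑ v ∈ Finset.univ,
          Wgt c s (fun t => (Xf (indF (fun w => E v w)) c s t) ^ 4
            + (Xf (indF (fun w => E w v)) c s t) ^ 4)
          ≤ (n:ℝ) * (2 * (s.card:ℝ) ^ 2) := by
        have : ∀ v ∈ Finset.univ,
            Wgt c s (fun t => (Xf (indF (fun w => E v w)) c s t) ^ 4
              + (Xf (indF (fun w => E w v)) c s t) ^ 4)
            ≤ 2 * (s.card:ℝ) ^ 2 := by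
          intro v _
          rw [Wgt_add]
          linarith [hmom (fun w => E v w), hmom (fun w => E w v)]
        calc _ ≤ ∑ _v ∈ (Finset.univ : Finset V), 2 * (s.card:ℝ) ^ 2 :=
              Finset.sum_le_sum this
          _ = (n:ℝ) * (2 * (s.card:ℝ) ^ 2) := by
              rw [Finset.sum_const, nsmul_eq_mul]; rw [hn_def]; norm_num
      have h1 := hmom (fun _ => True)
      have hk2 : ((s.card:ℝ)) ^ 2 ≤ (n:ℝ) ^ 2 := by nlinarith [hkn, hkR]
      have hn23 : (n:ℝ) ^ 2 ≤ (n:ℝ) ^ 3 := by nlinarith [hnR1, hnR0]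
      have h2 : (n:ℝ) * (2 * (s.card:ℝ) ^ 2) ≤ 2 * (n:ℝ) ^ 3 := by
        nlinarith [hk2, hnR0]
      linarith
    obtain ⟨t, hts, hGt⟩ := Wgt_exists_le hc0 hc1 s hWG
    beta_reduce at hGt
    -- numeric key fact
    have key : ∀ x : ℝ, x ^ 4 ≤ 3 * (n:ℝ) ^ 3 → |x| ≤ ε * n / 2 := by
      intro x hx
      have h48 : 48 ≤ ε ^ 4 * n := by
        rw [div_le_iff₀ hε4] at hnR; linarith
      have hB4 : 3 * (n:ℝ) ^ 3 ≤ (ε * n / 2) ^ 4 := by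
        have hn3 : (0:ℝ) ≤ (n:ℝ) ^ 3 := by positivity
        have h2 := mul_le_mul_of_nonneg_right h48 hn3
        nlinarith [h2]
      have habs : |x| ^ 4 ≤ (ε * n / 2) ^ 4 := by
        have h1 : |x| ^ 4 = x ^ 4 := by
          rw [← abs_pow]; exact abs_of_nonneg (by positivity)
        rw [h1]; linarith
      exact (pow_le_pow_iff_left₀ (abs_nonneg x) (by positivity) (by norm_num)).1 habs
    -- individual fourth-moment bounds at t
    have hnonneg : ∀ v ∈ (Finset.univ : Finset V),
        (0:ℝ) ≤ (Xf (indF (fun w => E v w)) c s t) ^ 4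
          + (Xf (indF (fun w => E w v)) c s t) ^ 4 := fun v _ => by positivity
    have hsz4 : (Xf (indF (fun _ => True)) c s t) ^ 4 ≤ 3 * (n:ℝ) ^ 3 := by
      have h1 := Finset.sum_nonneg hnonneg
      linarith
    have hout4 : ∀ v, (Xf (indF (fun w => E v w)) c s t) ^ 4 ≤ 3 * (n:ℝ) ^ 3 := by
      intro v
      have h1 : (Xf (indF (fun w => E v w)) c s t) ^ 4
          + (Xf (indF (fun w => E w v)) c s t) ^ 4
          ≤ ∑ u ∈ Finset.univ, ((Xf (indF (fun w => E u w)) c s t) ^ 4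
            + (Xf (indF (fun w => E w u)) c s t) ^ 4) :=
        Finset.single_le_sum hnonneg (Finset.mem_univ v)
      have h2 : (0:ℝ) ≤ (Xf (indF (fun _ => True)) c s t) ^ 4 := by positivity
      have h3 : (0:ℝ) ≤ (Xf (indF (fun w => E w v)) c s t) ^ 4 := by positivity
      linarith
    have hin4 : ∀ v, (Xf (indF (fun w => E w v)) c s t) ^ 4 ≤ 3 * (n:ℝ) ^ 3 := by
      intro v
      have h1 : (Xf (indF (fun w => E v w)) c s t) ^ 4
          + (Xf (indF (fun w => E w v)) c s t) ^ 4
          ≤ ∑ u ∈ Finset.univ, ((Xf (indF (fun w => E u w)) c s t) ^ 4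
            + (Xf (indF (fun w => E w u)) c s t) ^ 4) :=
        Finset.single_le_sum hnonneg (Finset.mem_univ v)
      have h2 : (0:ℝ) ≤ (Xf (indF (fun _ => True)) c s t) ^ 4 := by positivity
      have h3 : (0:ℝ) ≤ (Xf (indF (fun w => E v w)) c s t) ^ 4 := by positivity
      linarith
    -- size control
    have hXsz : Xf (indF (fun _ => True)) c s t = (t.card : ℝ) - m := by
      rw [Xf_indF _ hts, Finset.filter_true, Finset.inter_eq_right.2 hts, hck]
    have hszb : |(t.card : ℝ) - m| ≤ ε * n / 2 := by
      rw [← hXsz]; exact key _ hsz4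
    -- adjust to exact size m
    obtain ⟨t', ht's, ht'card, hdiff⟩ :
        ∃ t', t' ⊆ s ∧ t'.card = m ∧
          ∀ N : Finset V, |((N ∩ t').card : ℝ) - ((N ∩ t).card : ℝ)| ≤ ε * n / 2 := by
      rcases le_or_gt m t.card with hmt | hmt
      · obtain ⟨t', ht't, ht'c⟩ := Finset.exists_subset_card_eq hmt
        refine ⟨t', ht't.trans hts, ht'c, fun N => ?_⟩
        refine le_trans (card_inter_abs ht't) ?_
        rw [ht'c]
        have h1 : (t.card:ℝ) - m ≤ |(t.card:ℝ) - m| := le_abs_self _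
        linarith
      · obtain ⟨t', htt', ht's, ht'c⟩ :=
          Finset.exists_subsuperset_card_eq hts (le_of_lt hmt) hmk
        refine ⟨t', ht's, ht'c, fun N => ?_⟩
        have h1 := card_inter_abs (N := N) htt'
        rw [abs_sub_comm] at h1
        rw [ht'c] at h1
        refine le_trans h1 ?_
        have h2 : (m:ℝ) - t.card ≤ |(t.card:ℝ) - m| := by
          rw [abs_sub_comm]; exact le_abs_self _
        linarith
    -- the master estimate for any predicate
    have keyP : ∀ P : V → Prop, (Xf (indF P) c s t) ^ 4 ≤ 3 * (n:ℝ) ^ 3 →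
        |(((s.filter P) ∩ t').card : ℝ) - c * ((s.filter P).card : ℝ)| ≤ ε * n := by
      intro P h4
      have hX := Xf_indF (c := c) P hts
      have h1 : |(((s.filter P) ∩ t).card : ℝ) - c * ((s.filter P).card : ℝ)|
          ≤ ε * n / 2 := by
        rw [← hX]; exact key _ h4
      have h2 := hdiff (s.filter P)
      calc |(((s.filter P) ∩ t').card : ℝ) - c * ((s.filter P).card : ℝ)|
          ≤ |(((s.filter P) ∩ t').card : ℝ) - (((s.filter P) ∩ t).card : ℝ)|
            + |(((s.filter P) ∩ t).card : ℝ) - c * ((s.filter P).card : ℝ)| :=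
            abs_sub_le _ _ _
        _ ≤ ε * n / 2 + ε * n / 2 := add_le_add h2 h1
        _ = ε * n := by ring
    -- set/finset translations
    have hsetT : ∀ P : V → Prop, {w ∈ (↑t' : Set V) | P w}.ncard
        = ((s.filter P) ∩ t').card := by
      intro P
      have e1 : {w ∈ (↑t' : Set V) | P w} = ↑(t'.filter P) := by
        ext w; simp
      rw [e1, Set.ncard_coe_finset]
      congr 1
      ext w
      simp only [Finset.mem_filter, Finset.mem_inter]
      exact ⟨fun ⟨h1, h2⟩ => ⟨⟨ht's h1, h2⟩, h1⟩, fun ⟨⟨_, h2⟩, h1⟩ => ⟨h1, h2⟩⟩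
    have hsetS : ∀ P : V → Prop, {w ∈ S | P w}.ncard = (s.filter P).card := by
      intro P
      rw [← hcoe]
      have e1 : {w ∈ (↑s : Set V) | P w} = ↑(s.filter P) := by ext w; simp
      rw [e1, Set.ncard_coe_finset]
    have hsetD : ∀ P : V → Prop, {w ∈ S \ (↑t' : Set V) | P w}.ncard
        = ((s.filter P) \ t').card := by
      intro P
      rw [← hcoe]
      have e1 : {w ∈ ((↑s : Set V) \ (↑t' : Set V)) | P w} = ↑((s.filter P) \ t') := by
        ext w
        simp only [Set.mem_setOf_eq, Set.mem_sep_iff, Set.mem_diff, Finset.coe_sdiff,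
          Finset.mem_coe, Finset.mem_sdiff, Finset.mem_filter]
        tauto
      rw [e1, Set.ncard_coe_finset]
    have hcardD : ∀ P : V → Prop, (((s.filter P) \ t').card : ℝ)
        = ((s.filter P).card : ℝ) - (((s.filter P) ∩ t').card : ℝ) := by
      intro P
      have h1 : (s.filter P) \ t' = (s.filter P) \ ((s.filter P) ∩ t') :=
        (Finset.sdiff_inter_self_left _ _).symm
      rw [h1, Finset.card_sdiff_of_subset Finset.inter_subset_left,
        Nat.cast_sub (Finset.card_le_card Finset.inter_subset_left)]
    -- conclude
    refine ⟨(↑t' : Set V), ?_, ?_, fun v => ?_⟩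
    · rw [← hcoe]; exact Finset.coe_subset.2 ht's
    · rw [Set.ncard_coe_finset]; exact ht'card
    · rw [hScard]
      have hOut := keyP (fun w => E v w) (hout4 v)
      have hIn := keyP (fun w => E w v) (hin4 v)
      refine ⟨?_, ?_, ?_, ?_⟩
      · rw [hsetT (fun w => E v w), hsetS (fun w => E v w)]
        exact hOut
      · rw [hsetT (fun w => E w v), hsetS (fun w => E w v)]
        exact hIn
      · rw [hsetD (fun w => E v w), hsetS (fun w => E v w), hcardD (fun w => E v w)]
        have he : ((s.filter (fun w => E v w)).card : ℝ)
            - (((s.filter (fun w => E v w)) ∩ t').card : ℝ)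
            - (1 - c) * ((s.filter (fun w => E v w)).card : ℝ)
            = -((((s.filter (fun w => E v w)) ∩ t').card : ℝ)
              - c * ((s.filter (fun w => E v w)).card : ℝ)) := by ring
        rw [he, abs_neg]
        exact hOut
      · rw [hsetD (fun w => E w v), hsetS (fun w => E w v), hcardD (fun w => E w v)]
        have he : ((s.filter (fun w => E w v)).card : ℝ)
            - (((s.filter (fun w => E w v)) ∩ t').card : ℝ)
            - (1 - c) * ((s.filter (fun w => E w v)).card : ℝ)
            = -((((s.filter (fun w => E w v)) ∩ t').card : ℝ)
              - c * ((s.filter (fun w => E w v)).card : ℝ)) := by ring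
        rw [he, abs_neg]
        exact hIn
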